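/- Let R be an associative unital ring. Then every nonzero cyclic singular left R-module has a nonzero socle if and only if every singular left R-module is semi-Artinian. -/

import Mathlib

universe u v w

/-- The socle of a module: the sum (supremum) of all simple submodules. -/
def moduleSocle (R : Type u) [Ring R] (M : Type v) [AddCommGroup M] [Module R M] :
    Submodule R M :=
  sSup {S : Submodule R M | IsSimpleModule R S}

/-- A submodule `N` of `M` is essential if `N ⊓ L ≠ ⊥` for every nonzero submodule `L` of `M`. -/
def IsEssentialSubmodule {R : Type u} [Ring R] {M : Type v} [AddCommGroup M] [Module R M]
    (N : Submodule R M) : Prop :=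
  ∀ L : Submodule R M, L ≠ ⊥ → N ⊓ L ≠ ⊥

/-- A module is semi-Artinian if every nonzero quotient has a nonzero socle. -/
def IsSemiartinianModule (R : Type u) [Ring R] (M : Type v) [AddCommGroup M] [Module R M] :
    Prop :=
  ∀ N : Submodule R M, N ≠ ⊤ → moduleSocle R (M ⧸ N) ≠ ⊥

/-- A module is singular if the annihilator of each of its elements is an essential left
ideal of `R`. -/
def IsSingularModule (R : Type u) [Ring R] (M : Type v) [AddCommGroup M] [Module R M] : Prop :=
  ∀ m : M, IsEssentialSubmodule (LinearMap.ker (LinearMap.toSpanSingleton R M m))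

/-- Property (◇): every finitely generated left `R`-module containing an essential simple
submodule is Artinian. -/
def HasPropertyDiamond (R : Type u) [Ring R] : Prop :=
  ∀ (M : Type v) [AddCommGroup M] [Module R M], Module.Finite R M →
    (∃ S : Submodule R M, IsSimpleModule R S ∧ IsEssentialSubmodule S) → IsArtinian R M

/-- A left C-ring: every nonzero cyclic singular left module has a nonzero socle. -/
def IsLeftCRing (R : Type u) [Ring R] : Prop :=
  ∀ (M : Type v) [AddCommGroup M] [Module R M], Nontrivial M →
    (∃ m : M, Submodule.span R {m} = ⊤) → IsSingularModule R M →
    moduleSocle R M ≠ ⊥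

/-- The Dickson torsion part of a module: the sum of all its semi-Artinian submodules. -/
def dicksonTorsionPart (R : Type u) [Ring R] (A : Type v) [AddCommGroup A] [Module R A] :
    Submodule R A :=
  sSup {N : Submodule R A | IsSemiartinianModule R N}

section Aux

variable {R : Type u} [Ring R]

lemma socle_ne_bot_iff {M : Type v} [AddCommGroup M] [Module R M] :
    moduleSocle R M ≠ ⊥ ↔ ∃ S : Submodule R M, IsSimpleModule R S := by
  constructor
  · intro h
    by_contra hn
    push_neg at hn
    apply h
    rw [moduleSocle, sSup_eq_bot]
    intro S hS
    exact absurd hS (hn S)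
  · rintro ⟨S, hS⟩ h
    have : Nontrivial S := IsSimpleModule.nontrivial R S
    have hSne : S ≠ ⊥ := Submodule.nontrivial_iff_ne_bot.mp this
    exact hSne (le_bot_iff.mp (h ▸ le_sSup (show S ∈ {S : Submodule R M | IsSimpleModule R S} from hS)))

lemma isSimpleModule_map {A : Type v} {B : Type w} [AddCommGroup A] [Module R A]
    [AddCommGroup B] [Module R B] (f : A →ₗ[R] B) (hf : Function.Injective f)
    (S : Submodule R A) (hS : IsSimpleModule R S) :
    IsSimpleModule R (Submodule.map f S) := by
  have := hS
  exact IsSimpleModule.congr (Submodule.equivMapOfInjective f hf S).symm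

lemma essential_mono {M : Type v} [AddCommGroup M] [Module R M] {N N' : Submodule R M}
    (h : N ≤ N') (hN : IsEssentialSubmodule N) : IsEssentialSubmodule N' := by
  intro L hL hbot
  exact hN L hL (le_bot_iff.mp (hbot ▸ inf_le_inf_right L h))

lemma singular_submodule {M : Type v} [AddCommGroup M] [Module R M]
    (h : IsSingularModule R M) (P : Submodule R M) : IsSingularModule R P := by
  intro m
  have : LinearMap.ker (LinearMap.toSpanSingleton R M (m : M)) =
      LinearMap.ker (LinearMap.toSpanSingleton R P m) := by
    ext r
    simp [LinearMap.mem_ker, LinearMap.toSpanSingleton_apply, Subtype.ext_iff]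
  exact this ▸ h (m : M)

lemma singular_quotient {M : Type v} [AddCommGroup M] [Module R M]
    (h : IsSingularModule R M) (N : Submodule R M) : IsSingularModule R (M ⧸ N) := by
  intro m
  obtain ⟨x, rfl⟩ := Submodule.Quotient.mk_surjective N m
  refine essential_mono ?_ (h x)
  intro r hr
  simp only [LinearMap.mem_ker, LinearMap.toSpanSingleton_apply] at hr ⊢
  rw [← Submodule.Quotient.mk_smul, hr, Submodule.Quotient.mk_zero]

end Aux

/-- `R` is a left C-ring iff every singular left `R`-module is semi-Artinian. -/
theorem stmt14 (R : Type u) [Ring R] :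
    IsLeftCRing.{u, v} R ↔
      ∀ (M : Type v) [AddCommGroup M] [Module R M], IsSingularModule R M →
        IsSemiartinianModule R M := by
  constructor
  · intro hC M _ _ hsing N hN
    set Q := M ⧸ N
    have hQsing : IsSingularModule R Q := singular_quotient hsing N
    -- Q is nonzero
    have hQnt : Nontrivial Q := Submodule.Quotient.nontrivial_iff.mpr hN
    obtain ⟨m, hm⟩ := exists_ne (0 : Q)
    set P : Submodule R Q := Submodule.span R {m}
    have hmP : m ∈ P := Submodule.mem_span_singleton_self m
    have hPnt : Nontrivial P := ⟨⟨m, hmP⟩, 0, by simp [Subtype.ext_iff, hm]⟩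
    have hPcyc : ∃ x : P, Submodule.span R {x} = ⊤ := by
      refine ⟨⟨m, hmP⟩, ?_⟩
      rw [eq_top_iff]
      rintro ⟨y, hy⟩ -
      rw [Submodule.mem_span_singleton] at hy
      obtain ⟨r, rfl⟩ := hy
      exact Submodule.mem_span_singleton.mpr ⟨r, rfl⟩
    have hPsing : IsSingularModule R P := singular_submodule hQsing P
    have := hC P hPnt hPcyc hPsing
    obtain ⟨S, hS⟩ := socle_ne_bot_iff.mp this
    exact socle_ne_bot_iff.mpr ⟨Submodule.map P.subtype S,
      isSimpleModule_map P.subtype (Submodule.injective_subtype P) S hS⟩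
  · intro h M _ _ hnt hcyc hsing
    have hsa := h M hsing
    have hbot : (⊥ : Submodule R M) ≠ ⊤ := bot_ne_top
    have := hsa ⊥ hbot
    obtain ⟨S, hS⟩ := socle_ne_bot_iff.mp this
    have e : (M ⧸ (⊥ : Submodule R M)) ≃ₗ[R] M := Submodule.quotEquivOfEqBot ⊥ rfl
    exact socle_ne_bot_iff.mpr ⟨Submodule.map e.toLinearMap S,
      isSimpleModule_map e.toLinearMap e.injective S hS⟩
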